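/- arXiv:2303.06797 — 2 statements merged into one kernel-verified Lean document; each statement's English description precedes it below -/
import Mathlib

section
/- Let N ≥ 1 and let a, x ∈ ℝ^N. Define the half-sample symmetric extension x_e ∈ ℝ^{2N} of x by x_e[n] = x[n] for 0 ≤ n ≤ N−1 and x_e[n] = x[2N−1−n] for N ≤ n ≤ 2N−1, and define the whole-sample symmetric kernel extension a_e ∈ ℝ^{2N} of a by a_e[0] = a[0], a_e[m] = a[m] and a_e[2N−m] = a[m] for 1 ≤ m ≤ N−1, and a_e[N] = 0. Define the symmetric convolution y = a *_s x ∈ ℝ^N by y[n] = Σ_{m=0}^{2N−1} a_e[m] · x_e[(n − m) mod 2N] for 0 ≤ n ≤ N−1. Then for every 0 ≤ k ≤ N−1, the unnormalized type-II DCT of y satisfies Y[k] = Â[k] · X[k], where X[k] = Σ_{n=0}^{N−1} x[n] cos(π(n+1/2)k/N), Y[k] = Σ_{n=0}^{N−1} y[n] cos(π(n+1/2)k/N), and Â[k] = a[0] + 2 Σ_{n=1}^{N−1} a[n] cos(πnk/N). (DCT convolution theorem: symmetric convolution in the space domain is equivalent to element-wise multiplication in the DCT domain.) -/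
open Finset

noncomputable def Cc (N k : ℕ) (t : ℝ) : ℝ := Real.cos (Real.pi * t * (k : ℝ) / (N : ℝ))

lemma Cc_even (N k : ℕ) (t : ℝ) : Cc N k (-t) = Cc N k t := by
  unfold Cc
  rw [show Real.pi * (-t) * (k:ℝ) / (N:ℝ) = -(Real.pi * t * (k:ℝ) / (N:ℝ)) by ring,
    Real.cos_neg]

lemma Cc_refl (N k : ℕ) (hN : 0 < N) (t : ℝ) : Cc N k (2 * N - t) = Cc N k t := by
  unfold Cc
  have hN' : (N : ℝ) ≠ 0 := Nat.cast_ne_zero.mpr hN.ne'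
  have : Real.pi * (2 * N - t) * (k : ℝ) / (N : ℝ)
      = (k : ℤ) * (2 * Real.pi) - Real.pi * t * (k : ℝ) / (N : ℝ) := by
    push_cast; field_simp
  rw [this, Real.cos_int_mul_two_pi_sub]

lemma Cc_prod (N k : ℕ) (t s : ℝ) :
    Cc N k (t + s) + Cc N k (t - s) = 2 * Cc N k t * Cc N k s := by
  unfold Cc
  rw [show Real.pi * (t + s) * (k:ℝ) / (N:ℝ)
      = Real.pi * t * (k:ℝ) / (N:ℝ) + Real.pi * s * (k:ℝ) / (N:ℝ) by ring,
    show Real.pi * (t - s) * (k:ℝ) / (N:ℝ)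
      = Real.pi * t * (k:ℝ) / (N:ℝ) - Real.pi * s * (k:ℝ) / (N:ℝ) by ring,
    Real.cos_add, Real.cos_sub]
  ring

lemma key_lemma (N k : ℕ) (hN : 1 ≤ N) (x xe : ℕ → ℝ)
    (hxe₁ : ∀ n, n < N → xe n = x n)
    (hxe₂ : ∀ n, N ≤ n → n < 2 * N → xe n = x (2 * N - 1 - n))
    (m : ℕ) (hm1 : 1 ≤ m) (hm2 : m < N) :
    (∑ n ∈ range N, xe ((n + 2 * N - m) % (2 * N)) * Cc N k ((n : ℝ) + 1 / 2))
      + ∑ n ∈ range N, xe ((n + 2 * N - (2 * N - m)) % (2 * N)) * Cc N k ((n : ℝ) + 1 / 2)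
    = 2 * Cc N k (m : ℝ) * ∑ n ∈ range N, x n * Cc N k ((n : ℝ) + 1 / 2) := by
  -- Piece A1 : n < m part of the first sum
  have hA1 : ∑ n ∈ Ico 0 m, xe ((n + 2 * N - m) % (2 * N)) * Cc N k ((n : ℝ) + 1 / 2)
      = ∑ j ∈ Ico 0 m, x j * Cc N k ((j : ℝ) + 1 / 2 - m) := by
    rw [show Ico 0 m = range m by rw [range_eq_Ico]]
    calc ∑ n ∈ range m, xe ((n + 2 * N - m) % (2 * N)) * Cc N k ((n : ℝ) + 1 / 2)
        = ∑ n ∈ range m, x (m - 1 - n) * Cc N k (((m - 1 - n : ℕ) : ℝ) + 1 / 2 - m) := by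
          refine sum_congr rfl fun n hn => ?_
          rw [mem_range] at hn
          have h1 : (n + 2 * N - m) % (2 * N) = n + 2 * N - m :=
            Nat.mod_eq_of_lt (by omega)
          rw [h1, hxe₂ _ (by omega) (by omega),
            show 2 * N - 1 - (n + 2 * N - m) = m - 1 - n by omega]
          congr 1
          have hc : ((m - 1 - n : ℕ) : ℝ) = (m : ℝ) - 1 - n := by
            push_cast [Nat.cast_sub (by omega : n ≤ m - 1), Nat.cast_sub (by omega : 1 ≤ m)]
            ring
          rw [hc, show (m : ℝ) - 1 - n + 1 / 2 - m = -((n : ℝ) + 1 / 2) by ring, Cc_even]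
      _ = ∑ j ∈ range m, x j * Cc N k ((j : ℝ) + 1 / 2 - m) :=
          sum_range_reflect (fun j => x j * Cc N k ((j : ℝ) + 1 / 2 - m)) m
  -- Piece B1 : n ≥ m part of the first sum
  have hB1 : ∑ n ∈ Ico m N, xe ((n + 2 * N - m) % (2 * N)) * Cc N k ((n : ℝ) + 1 / 2)
      = ∑ j ∈ Ico 0 (N - m), x j * Cc N k ((j : ℝ) + 1 / 2 + m) := by
    rw [Finset.sum_Ico_eq_sum_range, show Ico 0 (N - m) = range (N - m) by rw [range_eq_Ico]]
    refine sum_congr rfl fun i hi => ?_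
    rw [mem_range] at hi
    have h1 : (m + i + 2 * N - m) % (2 * N) = i := by
      rw [show m + i + 2 * N - m = i + 2 * N by omega, Nat.add_mod_right]
      exact Nat.mod_eq_of_lt (by omega)
    rw [h1, hxe₁ _ (by omega)]
    congr 1
    push_cast
    ring
  -- Piece A2 : n < N - m part of the second sum
  have hA2 : ∑ n ∈ Ico 0 (N - m), xe ((n + 2 * N - (2 * N - m)) % (2 * N)) * Cc N k ((n : ℝ) + 1 / 2)
      = ∑ j ∈ Ico m N, x j * Cc N k ((j : ℝ) + 1 / 2 - m) := by
    rw [show (Ico 0 (N - m)) = range (N - m) from (range_eq_Ico (N - m)).symm]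
    rw [Finset.sum_Ico_eq_sum_range (f := fun j => x j * Cc N k ((j : ℝ) + 1 / 2 - (m : ℝ)))]
    refine sum_congr rfl fun i hi => ?_
    rw [mem_range] at hi
    have h1 : (i + 2 * N - (2 * N - m)) % (2 * N) = i + m := by
      rw [show i + 2 * N - (2 * N - m) = i + m by omega]
      exact Nat.mod_eq_of_lt (by omega)
    rw [h1, hxe₁ _ (by omega), show m + i = i + m by omega]
    congr 1
    push_cast
    ring
  -- Piece B2 : n ≥ N - m part of the second sum
  have hB2 : ∑ n ∈ Ico (N - m) N, xe ((n + 2 * N - (2 * N - m)) % (2 * N)) * Cc N k ((n : ℝ) + 1 / 2)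
      = ∑ j ∈ Ico (N - m) N, x j * Cc N k ((j : ℝ) + 1 / 2 + m) := by
    refine Finset.sum_nbij' (fun n => 2 * N - 1 - m - n) (fun n => 2 * N - 1 - m - n)
      ?_ ?_ ?_ ?_ ?_
    · intro n hn; rw [mem_Ico] at hn ⊢; omega
    · intro n hn; rw [mem_Ico] at hn ⊢; omega
    · intro n hn; rw [mem_Ico] at hn; omega
    · intro n hn; rw [mem_Ico] at hn; omega
    · intro n hn; rw [mem_Ico] at hn
      have h1 : (n + 2 * N - (2 * N - m)) % (2 * N) = n + m := by
        rw [show n + 2 * N - (2 * N - m) = n + m by omega]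
        exact Nat.mod_eq_of_lt (by omega)
      rw [h1, hxe₂ _ (by omega) (by omega),
        show 2 * N - 1 - (n + m) = 2 * N - 1 - m - n by omega]
      congr 1
      have hc : ((2 * N - 1 - m - n : ℕ) : ℝ) = 2 * (N : ℝ) - 1 - m - n := by
        have : (2 * N - 1 - m - n : ℕ) = 2 * N - (1 + m + n) := by omega
        rw [this, Nat.cast_sub (by omega)]
        push_cast; ring
      rw [hc, show 2 * (N : ℝ) - 1 - m - n + 1 / 2 + m = 2 * (N : ℝ) - ((n : ℝ) + 1 / 2) by ring,
        Cc_refl _ _ (by omega)]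
  -- assemble
  have hsplit1 : ∑ n ∈ range N, xe ((n + 2 * N - m) % (2 * N)) * Cc N k ((n : ℝ) + 1 / 2)
      = (∑ n ∈ Ico 0 m, xe ((n + 2 * N - m) % (2 * N)) * Cc N k ((n : ℝ) + 1 / 2))
        + ∑ n ∈ Ico m N, xe ((n + 2 * N - m) % (2 * N)) * Cc N k ((n : ℝ) + 1 / 2) := by
    rw [range_eq_Ico, Finset.sum_Ico_consecutive _ (Nat.zero_le m) hm2.le]
  have hsplit2 : ∑ n ∈ range N, xe ((n + 2 * N - (2 * N - m)) % (2 * N)) * Cc N k ((n : ℝ) + 1 / 2)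
      = (∑ n ∈ Ico 0 (N - m), xe ((n + 2 * N - (2 * N - m)) % (2 * N)) * Cc N k ((n : ℝ) + 1 / 2))
        + ∑ n ∈ Ico (N - m) N, xe ((n + 2 * N - (2 * N - m)) % (2 * N)) * Cc N k ((n : ℝ) + 1 / 2) := by
    rw [range_eq_Ico, Finset.sum_Ico_consecutive _ (Nat.zero_le _) (by omega)]
  rw [hsplit1, hsplit2, hA1, hB1, hA2, hB2]
  have hfull1 : (∑ j ∈ Ico 0 m, x j * Cc N k ((j : ℝ) + 1 / 2 - m))
      + ∑ j ∈ Ico m N, x j * Cc N k ((j : ℝ) + 1 / 2 - m)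
      = ∑ j ∈ range N, x j * Cc N k ((j : ℝ) + 1 / 2 - m) := by
    rw [range_eq_Ico, Finset.sum_Ico_consecutive _ (Nat.zero_le m) hm2.le]
  have hfull2 : (∑ j ∈ Ico 0 (N - m), x j * Cc N k ((j : ℝ) + 1 / 2 + m))
      + ∑ j ∈ Ico (N - m) N, x j * Cc N k ((j : ℝ) + 1 / 2 + m)
      = ∑ j ∈ range N, x j * Cc N k ((j : ℝ) + 1 / 2 + m) := by
    rw [range_eq_Ico, Finset.sum_Ico_consecutive _ (Nat.zero_le _) (by omega)]
  calc (∑ j ∈ Ico 0 m, x j * Cc N k ((j : ℝ) + 1 / 2 - m)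
          + ∑ j ∈ Ico 0 (N - m), x j * Cc N k ((j : ℝ) + 1 / 2 + m))
        + (∑ j ∈ Ico m N, x j * Cc N k ((j : ℝ) + 1 / 2 - m)
          + ∑ j ∈ Ico (N - m) N, x j * Cc N k ((j : ℝ) + 1 / 2 + m))
      = (∑ j ∈ range N, x j * Cc N k ((j : ℝ) + 1 / 2 - m))
        + ∑ j ∈ range N, x j * Cc N k ((j : ℝ) + 1 / 2 + m) := by
        rw [← hfull1, ← hfull2]; ring
    _ = ∑ j ∈ range N, x j * (2 * Cc N k ((j : ℝ) + 1 / 2) * Cc N k (m : ℝ)) := by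
        rw [← Finset.sum_add_distrib]
        refine sum_congr rfl fun j _ => ?_
        rw [← Cc_prod N k ((j : ℝ) + 1 / 2) (m : ℝ)]
        ring
    _ = 2 * Cc N k (m : ℝ) * ∑ n ∈ range N, x n * Cc N k ((n : ℝ) + 1 / 2) := by
        rw [Finset.mul_sum]
        refine sum_congr rfl fun j _ => by ring

/-- **DCT convolution theorem.** Symmetric convolution in the space domain is
equivalent to element-wise multiplication in the (unnormalized type-II) DCT domain. -/
theorem dct_convolution_theorem
    (N : ℕ) (hN : 1 ≤ N) (a x xe ae y : ℕ → ℝ)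
    -- half-sample symmetric extension of `x`
    (hxe₁ : ∀ n, n < N → xe n = x n)
    (hxe₂ : ∀ n, N ≤ n → n < 2 * N → xe n = x (2 * N - 1 - n))
    -- whole-sample symmetric extension of the kernel `a`
    (hae₀ : ae 0 = a 0)
    (hae₁ : ∀ m, 1 ≤ m → m ≤ N - 1 → ae m = a m)
    (hae₂ : ∀ m, 1 ≤ m → m ≤ N - 1 → ae (2 * N - m) = a m)
    (haeN : ae N = 0)
    -- symmetric convolution `y = a *_s x`, a 2N-periodic circular convolution
    (hy : ∀ n, n < N →
      y n = ∑ m ∈ range (2 * N), ae m * xe ((n + 2 * N - m) % (2 * N)))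
    (k : ℕ) (hk : k < N) :
    (∑ n ∈ range N, y n * Real.cos (Real.pi * ((n : ℝ) + 1 / 2) * (k : ℝ) / (N : ℝ))) =
      ((a 0 + 2 * ∑ n ∈ Finset.Ico 1 N, a n * Real.cos (Real.pi * (n : ℝ) * (k : ℝ) / (N : ℝ))) *
        (∑ n ∈ range N, x n * Real.cos (Real.pi * ((n : ℝ) + 1 / 2) * (k : ℝ) / (N : ℝ)))) := by
  have hCc : ∀ t : ℝ, Real.cos (Real.pi * t * (k : ℝ) / (N : ℝ)) = Cc N k t := fun _ => rfl
  simp only [hCc]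
  set X := ∑ n ∈ range N, x n * Cc N k ((n : ℝ) + 1 / 2) with hX
  set S : ℕ → ℝ := fun m => ∑ n ∈ range N, xe ((n + 2 * N - m) % (2 * N)) * Cc N k ((n : ℝ) + 1 / 2)
    with hS
  have step1 : ∑ n ∈ range N, y n * Cc N k ((n : ℝ) + 1 / 2)
      = ∑ m ∈ range (2 * N), ae m * S m := by
    calc ∑ n ∈ range N, y n * Cc N k ((n : ℝ) + 1 / 2)
        = ∑ n ∈ range N, ∑ m ∈ range (2 * N),
            ae m * xe ((n + 2 * N - m) % (2 * N)) * Cc N k ((n : ℝ) + 1 / 2) := by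
          refine sum_congr rfl fun n hn => ?_
          rw [hy n (mem_range.mp hn), Finset.sum_mul]
      _ = ∑ m ∈ range (2 * N), ∑ n ∈ range N,
            ae m * xe ((n + 2 * N - m) % (2 * N)) * Cc N k ((n : ℝ) + 1 / 2) :=
          Finset.sum_comm
      _ = ∑ m ∈ range (2 * N), ae m * S m := by
          refine sum_congr rfl fun m hm => ?_
          rw [hS]; dsimp only
          rw [Finset.mul_sum]
          exact sum_congr rfl fun n hn => by ring
  rw [step1]
  -- split the range
  have hsplit : ∑ m ∈ range (2 * N), ae m * S m
      = ae 0 * S 0 + (∑ m ∈ Ico 1 N, ae m * S m) + ae N * S N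
        + ∑ m ∈ Ico (N + 1) (2 * N), ae m * S m := by
    rw [range_eq_Ico,
      ← Finset.sum_Ico_consecutive (fun m => ae m * S m) (show 0 ≤ N + 1 by omega)
        (show N + 1 ≤ 2 * N by omega),
      ← Finset.sum_Ico_consecutive (fun m => ae m * S m) (show 0 ≤ N by omega)
        (show N ≤ N + 1 by omega),
      ← Finset.sum_Ico_consecutive (fun m => ae m * S m) (show 0 ≤ 1 by omega)
        (show 1 ≤ N by omega)]
    rw [show Ico 0 1 = {0} from rfl, Finset.sum_singleton,
      Nat.Ico_succ_singleton, Finset.sum_singleton]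
  rw [hsplit, haeN, zero_mul, add_zero]
  -- reindex the top part
  have htop : ∑ m ∈ Ico (N + 1) (2 * N), ae m * S m
      = ∑ m ∈ Ico 1 N, ae (2 * N - m) * S (2 * N - m) := by
    refine Finset.sum_nbij' (fun m => 2 * N - m) (fun m => 2 * N - m) ?_ ?_ ?_ ?_ ?_
    · intro m hm; rw [mem_Ico] at hm ⊢; omega
    · intro m hm; rw [mem_Ico] at hm ⊢; omega
    · intro m hm; rw [mem_Ico] at hm; omega
    · intro m hm; rw [mem_Ico] at hm; omega
    · intro m hm; rw [mem_Ico] at hm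
      rw [show 2 * N - (2 * N - m) = m by omega]
  rw [htop, hae₀]
  -- S 0 = X
  have hS0 : S 0 = X := by
    rw [hS, hX]; dsimp only
    refine sum_congr rfl fun n hn => ?_
    rw [mem_range] at hn
    rw [show (n + 2 * N - 0) % (2 * N) = n by
      rw [Nat.sub_zero, Nat.add_mod_right]; exact Nat.mod_eq_of_lt (by omega)]
    rw [hxe₁ n hn]
  rw [hS0]
  -- replace ae by a on Ico 1 N
  have hrw1 : ∑ m ∈ Ico 1 N, ae m * S m = ∑ m ∈ Ico 1 N, a m * S m := by
    refine sum_congr rfl fun m hm => ?_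
    rw [mem_Ico] at hm
    rw [hae₁ m hm.1 (by omega)]
  have hrw2 : ∑ m ∈ Ico 1 N, ae (2 * N - m) * S (2 * N - m)
      = ∑ m ∈ Ico 1 N, a m * S (2 * N - m) := by
    refine sum_congr rfl fun m hm => ?_
    rw [mem_Ico] at hm
    rw [hae₂ m hm.1 (by omega)]
  rw [hrw1, hrw2]
  -- combine the two middle sums
  have hcomb : (a 0 * X + ∑ m ∈ Ico 1 N, a m * S m) + ∑ m ∈ Ico 1 N, a m * S (2 * N - m)
      = a 0 * X + ∑ m ∈ Ico 1 N, a m * (S m + S (2 * N - m)) := by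
    rw [add_assoc, ← Finset.sum_add_distrib]
    congr 1
    exact sum_congr rfl fun m hm => by ring
  rw [hcomb]
  -- apply the key lemma
  have hkey : ∀ m ∈ Ico 1 N, a m * (S m + S (2 * N - m)) = a m * (2 * Cc N k (m : ℝ) * X) := by
    intro m hm
    rw [mem_Ico] at hm
    congr 1
    exact key_lemma N k hN x xe hxe₁ hxe₂ m hm.1 hm.2
  rw [sum_congr rfl hkey, add_mul]
  congr 1
  rw [Finset.mul_sum (Ico 1 N) (fun m => a m * Cc N k (m : ℝ)) (2 : ℝ),
    Finset.sum_mul (Ico 1 N) (fun m => 2 * (a m * Cc N k (m : ℝ))) X]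
  exact sum_congr rfl fun m hm => by ring
end

section
/- Let N ≥ 1. The map D : ℝ^N → ℝ^N sending x to its unnormalized type-II DCT, (Dx)[k] = Σ_{n=0}^{N−1} x[n] cos(π(n+1/2)k/N), is a linear bijection. Consequently, for a, x ∈ ℝ^N, a vector y ∈ ℝ^N equals the symmetric convolution a *_s x if and only if (Dy)[k] = Â[k]·(Dx)[k] for all 0 ≤ k ≤ N−1, where Â[k] = a[0] + 2 Σ_{n=1}^{N−1} a[n] cos(πnk/N). (This one-to-one correspondence between space-domain kernels and their transform-domain representations is what allows convolution kernel weights to be learned directly in the transform domain.) -/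
open Finset

/-- Unnormalized type-II DCT of `x ∈ ℝ^N`:
`(Dx)[k] = Σ_{n=0}^{N−1} x[n] cos(π(n+1/2)k/N)`. -/
noncomputable def dct (N : ℕ) (x : Fin N → ℝ) : Fin N → ℝ := fun k =>
  ∑ n : Fin N, x n * Real.cos (Real.pi * (((n : ℕ) : ℝ) + 1 / 2) * ((k : ℕ) : ℝ) / (N : ℝ))

/-- Half-sample symmetric extension of `x ∈ ℝ^N`: `x_e[n] = x[n]` for `0 ≤ n ≤ N−1`
and `x_e[n] = x[2N−1−n]` for `N ≤ n ≤ 2N−1`. -/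
def symmExt (N : ℕ) (x : Fin N → ℝ) (n : ℕ) : ℝ :=
  if h : n < N then x ⟨n, h⟩
  else if h₂ : 2 * N - 1 - n < N then x ⟨2 * N - 1 - n, h₂⟩ else 0

/-- Whole-sample symmetric extension of the kernel `a ∈ ℝ^N`: `a_e[0] = a[0]`,
`a_e[m] = a[m]` and `a_e[2N−m] = a[m]` for `1 ≤ m ≤ N−1`, and `a_e[N] = 0`. -/
def kernelExt (N : ℕ) (a : Fin N → ℝ) (m : ℕ) : ℝ :=
  if h : m < N then a ⟨m, h⟩
  else if h₂ : N < m ∧ 2 * N - m < N then a ⟨2 * N - m, h₂.2⟩ else 0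

/-- Symmetric convolution `a *_s x`: the `2N`-periodic circular convolution of the
whole-sample symmetric extension of `a` with the half-sample symmetric extension of
`x`, restricted to indices `0 ≤ n ≤ N−1`. -/
noncomputable def symmConv (N : ℕ) (a x : Fin N → ℝ) : Fin N → ℝ := fun n =>
  ∑ m ∈ range (2 * N), kernelExt N a m * symmExt N x (((n : ℕ) + 2 * N - m) % (2 * N))

lemma tele (N : ℕ) (t : ℝ) :
    2 * Real.sin (t/2) * ∑ k ∈ range N, Real.cos (k * t)
      = Real.sin (N*t - t/2) + Real.sin (t/2) := by
  set f : ℕ → ℝ := fun k => Real.sin (k*t - t/2) with hf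
  have h : ∀ k ∈ range N, 2 * Real.sin (t/2) * Real.cos (k*t) = f (k+1) - f k := by
    intro k _
    simp only [hf]
    rw [Real.sin_sub_sin]
    push_cast
    ring_nf
  rw [Finset.mul_sum, Finset.sum_congr rfl h, Finset.sum_range_sub f N]
  simp only [hf]
  simp [Real.sin_neg]

lemma sum_cos_dvd (N : ℕ) (hN : 1 ≤ N) (j : ℤ) (hj : (2*(N:ℤ)) ∣ j) :
    ∑ k ∈ range N, Real.cos (Real.pi * j * k / N) = N := by
  obtain ⟨q, hq⟩ := hj
  have hN0 : (N:ℝ) ≠ 0 := by positivity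
  have : ∀ k ∈ range N, Real.cos (Real.pi * j * k / N) = 1 := by
    intro k _
    have harg : Real.pi * j * k / N = ((q*k : ℤ) : ℝ) * (2*Real.pi) := by
      push_cast [hq]; field_simp
    rw [harg, Real.cos_int_mul_two_pi]
  rw [Finset.sum_congr rfl this]
  simp

lemma sum_cos_not_dvd (N : ℕ) (hN : 1 ≤ N) (j : ℤ) (hj : ¬ (2*(N:ℤ)) ∣ j) :
    ∑ k ∈ range N, Real.cos (Real.pi * j * k / N) = if Even j then 0 else 1 := by
  have hN0 : (N:ℝ) ≠ 0 := by positivity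
  set t : ℝ := Real.pi * j / N with ht
  have hs : Real.sin (t/2) ≠ 0 := by
    intro h
    rw [Real.sin_eq_zero_iff] at h
    obtain ⟨n, hn⟩ := h
    apply hj
    refine ⟨n, ?_⟩
    have : (j:ℝ) = 2*N*n := by
      field_simp [ht] at hn
      have e : t * N = Real.pi * j := by rw [ht]; field_simp
      have h3 : Real.pi * ((2:ℝ)*N*n) = Real.pi * j := by linear_combination (N:ℝ) * hn + e
      have := mul_left_cancel₀ Real.pi_ne_zero h3
      linarith
    exact_mod_cast this
  have key := tele N t
  have harg : ∀ k ∈ range N, Real.cos ((k:ℝ) * t) = Real.cos (Real.pi * j * k / N) := by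
    intro k _; congr 1; rw [ht]; ring
  rw [Finset.sum_congr rfl harg] at key
  have hNt : (N:ℝ)*t = (j:ℝ)*Real.pi := by rw [ht]; field_simp
  rw [hNt, Real.sin_int_mul_pi_sub] at key
  have : 2 * Real.sin (t/2) * ∑ k ∈ range N, Real.cos (Real.pi * j * k / N)
      = 2 * Real.sin (t/2) * ((1 - (-1)^j)/2) := by
    rw [key]; ring
  have h2 := mul_left_cancel₀ (by simpa using hs : 2 * Real.sin (t/2) ≠ 0) this
  rw [h2]
  rcases Int.even_or_odd j with he | ho
  · rw [if_pos he, he.neg_one_zpow]; ring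
  · rw [if_neg (Int.not_even_iff_odd.mpr ho), ho.neg_one_zpow]; ring

lemma wt_sum (N : ℕ) (hN : 1 ≤ N) (f : ℕ → ℝ) :
    ∑ k ∈ range N, (if k = 0 then (1/2:ℝ) else 1) * f k
      = (∑ k ∈ range N, f k) - (1/2) * f 0 := by
  have : ∀ k ∈ range N, (if k = 0 then (1/2:ℝ) else 1) * f k
      = f k - (1/2) * (if k = 0 then f k else 0) := by
    intro k _
    by_cases hk : k = 0 <;> simp [hk] <;> ring
  rw [Finset.sum_congr rfl this, Finset.sum_sub_distrib, ← Finset.mul_sum,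
    Finset.sum_ite_eq' (range N) 0 f, if_pos (by simp [Nat.pos_of_ne_zero]; omega)]

lemma not_dvd_of_odd (N : ℕ) (j : ℤ) (hj : Odd j) : ¬ (2*(N:ℤ)) ∣ j := by
  intro h
  have h2 : (2:ℤ) ∣ j := dvd_trans ⟨N, rfl⟩ h
  rw [Int.odd_iff] at hj
  omega

lemma ortho (N : ℕ) (hN : 1 ≤ N) (n m : ℕ) (hn : n < N) (hm : m < N) :
    ∑ k ∈ range N, (if k = 0 then (1/2:ℝ) else 1) *
        (Real.cos (Real.pi * ((n:ℝ)+1/2) * k / N) * Real.cos (Real.pi * ((m:ℝ)+1/2) * k / N))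
      = if n = m then (N:ℝ)/2 else 0 := by
  have hterm : ∀ k ∈ range N,
      Real.cos (Real.pi * ((n:ℝ)+1/2) * k / N) * Real.cos (Real.pi * ((m:ℝ)+1/2) * k / N)
        = (Real.cos (Real.pi * ((n+m+1 : ℤ):ℝ) * k / N)
            + Real.cos (Real.pi * ((n-m : ℤ):ℝ) * k / N))/2 := by
    intro k _
    rw [show Real.pi * ((n+m+1 : ℤ):ℝ) * k / N
        = Real.pi * ((n:ℝ)+1/2) * k / N + Real.pi * ((m:ℝ)+1/2) * k / N by push_cast; ring,
      show Real.pi * ((n-m : ℤ):ℝ) * k / N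
        = Real.pi * ((n:ℝ)+1/2) * k / N - Real.pi * ((m:ℝ)+1/2) * k / N by push_cast; ring,
      Real.cos_add, Real.cos_sub]
    ring
  rw [Finset.sum_congr rfl (fun k hk => by rw [hterm k hk])]
  rw [wt_sum N hN]
  have hsplit : ∑ k ∈ range N,
      (Real.cos (Real.pi * ((n+m+1 : ℤ):ℝ) * k / N) + Real.cos (Real.pi * ((n-m : ℤ):ℝ) * k / N))/2
      = ((∑ k ∈ range N, Real.cos (Real.pi * ((n+m+1 : ℤ):ℝ) * k / N))
        + ∑ k ∈ range N, Real.cos (Real.pi * ((n-m : ℤ):ℝ) * k / N))/2 := by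
    rw [← Finset.sum_add_distrib, ← Finset.sum_div]
  rw [hsplit]
  have hf0 : (Real.cos (Real.pi * ((n+m+1 : ℤ):ℝ) * (0:ℕ) / N)
      + Real.cos (Real.pi * ((n-m : ℤ):ℝ) * (0:ℕ) / N))/2 = 1 := by
    norm_num
  by_cases hnm : n = m
  · subst hnm
    have hS2 : ∑ k ∈ range N, Real.cos (Real.pi * ((n-n : ℤ):ℝ) * k / N) = N := by
      rw [sum_cos_dvd N hN _ (by simp)]
    have hS1 : ∑ k ∈ range N, Real.cos (Real.pi * ((n+n+1 : ℤ):ℝ) * k / N) = 1 := by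
      rw [sum_cos_not_dvd N hN _ (not_dvd_of_odd N _ ⟨(n:ℤ), by ring⟩),
        if_neg (Int.not_even_iff_odd.mpr ⟨(n:ℤ), by ring⟩)]
    rw [hS1, hS2, hf0, if_pos rfl]
    ring
  · have hd1 : ¬ (2*(N:ℤ)) ∣ ((n:ℤ)+m+1) := by
      intro hd
      have := Int.eq_zero_of_abs_lt_dvd hd (by rw [abs_lt]; constructor <;> push_cast <;> omega)
      omega
    have hd2 : ¬ (2*(N:ℤ)) ∣ ((n:ℤ)-m) := by
      intro hd
      have := Int.eq_zero_of_abs_lt_dvd hd (by rw [abs_lt]; constructor <;> push_cast <;> omega)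
      omega
    rw [sum_cos_not_dvd N hN _ hd1, sum_cos_not_dvd N hN _ hd2, hf0, if_neg hnm]
    have hpar : (Even ((n:ℤ)+m+1) ∧ ¬ Even ((n:ℤ)-m)) ∨ (¬ Even ((n:ℤ)+m+1) ∧ Even ((n:ℤ)-m)) := by
      rw [Int.even_iff, Int.even_iff]
      omega
    rcases hpar with ⟨h1, h2⟩ | ⟨h1, h2⟩
    · rw [if_pos h1, if_neg h2]; ring
    · rw [if_neg h1, if_pos h2]; ring

lemma dct_eq_zero (N : ℕ) (hN : 1 ≤ N) (x : Fin N → ℝ) (h : dct N x = 0) : x = 0 := by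
  have hN0 : (N:ℝ) ≠ 0 := by positivity
  funext m
  set wt : ℕ → ℝ := fun k => if k = 0 then (1/2:ℝ) else 1 with hwt
  have key : (0:ℝ) = ∑ k : Fin N, wt k * dct N x k
      * Real.cos (Real.pi * (((m:ℕ):ℝ) + 1/2) * ((k:ℕ):ℝ) / N) := by
    simp [h]
  have step1 : ∀ k : Fin N, wt k * dct N x k
      * Real.cos (Real.pi * (((m:ℕ):ℝ) + 1/2) * ((k:ℕ):ℝ) / N)
      = ∑ n : Fin N, x n * (wt k * (Real.cos (Real.pi * (((n:ℕ):ℝ) + 1/2) * ((k:ℕ):ℝ) / N)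
          * Real.cos (Real.pi * (((m:ℕ):ℝ) + 1/2) * ((k:ℕ):ℝ) / N))) := by
    intro k
    simp only [dct, Finset.mul_sum, Finset.sum_mul]
    exact Finset.sum_congr rfl fun n _ => by ring
  rw [Finset.sum_congr rfl (fun k _ => step1 k), Finset.sum_comm] at key
  have step2 : ∀ n : Fin N,
      ∑ k : Fin N, x n * (wt k * (Real.cos (Real.pi * (((n:ℕ):ℝ) + 1/2) * ((k:ℕ):ℝ) / N)
          * Real.cos (Real.pi * (((m:ℕ):ℝ) + 1/2) * ((k:ℕ):ℝ) / N)))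
      = x n * (if (n:ℕ) = (m:ℕ) then (N:ℝ)/2 else 0) := by
    intro n
    rw [← Finset.mul_sum]
    congr 1
    rw [Fin.sum_univ_eq_sum_range (fun k => wt k * (Real.cos (Real.pi * (((n:ℕ):ℝ) + 1/2) * (k:ℝ) / N)
          * Real.cos (Real.pi * (((m:ℕ):ℝ) + 1/2) * (k:ℝ) / N)))]
    exact ortho N hN n m n.isLt m.isLt
  rw [Finset.sum_congr rfl (fun n _ => step2 n)] at key
  rw [Finset.sum_eq_single m (fun n _ hnm => by
      rw [if_neg (fun hv => hnm (Fin.ext hv)), mul_zero])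
    (fun hm => absurd (Finset.mem_univ m) hm), if_pos rfl] at key
  have : x m * ((N:ℝ)/2) = 0 := key.symm
  rcases mul_eq_zero.mp this with h1 | h2
  · simp [h1]
  · exfalso; apply hN0; linarith

noncomputable def ck (N k : ℕ) (t : ℝ) : ℝ := Real.cos (Real.pi * k * t / N)

lemma ck_two_N_sub (N : ℕ) (hN : 1 ≤ N) (k : ℕ) (t : ℝ) : ck N k (2*N - t) = ck N k t := by
  have hN0 : (N:ℝ) ≠ 0 := by positivity
  rw [ck, ck, show Real.pi * k * (2*N - t) / N = (k:ℕ) * (2*Real.pi) - Real.pi * k * t / N by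
    field_simp, Real.cos_nat_mul_two_pi_sub]

lemma ck_mod (N : ℕ) (hN : 1 ≤ N) (k r : ℕ) (s : ℝ) :
    ck N k ((r % (2*N) : ℕ) + s) = ck N k (r + s) := by
  have hN0 : (N:ℝ) ≠ 0 := by positivity
  have hr : r = 2*N*(r/(2*N)) + r % (2*N) := (Nat.div_add_mod r (2*N)).symm
  have hr' : (r:ℝ) = 2*N*((r/(2*N) : ℕ):ℝ) + ((r % (2*N) : ℕ) : ℝ) := by exact_mod_cast congrArg (Nat.cast : ℕ → ℝ) hr
  rw [ck, ck, show Real.pi * k * ((r:ℝ)+s)/N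
      = Real.pi * k * (((r % (2*N):ℕ):ℝ)+s)/N + ((k*(r/(2*N)) : ℕ):ℝ) * (2*Real.pi) from by
    rw [hr']; push_cast; field_simp; ring, Real.cos_add_nat_mul_two_pi]

lemma symmExt_reflect (N : ℕ) (x : Fin N → ℝ) (n : ℕ) (hn : n < 2*N) :
    symmExt N x (2*N - 1 - n) = symmExt N x n := by
  unfold symmExt
  by_cases h : n < N
  · have he : 2*N-1-(2*N-1-n) = n := by omega
    rw [dif_neg (by omega), dif_pos (by rw [he]; exact h)]
    simp only [he]
    rw [dif_pos h]
  · rw [dif_pos (by omega : 2*N-1-n < N), dif_neg h, dif_pos (by omega : 2*N-1-n < N)]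

lemma symmExt_lt (N : ℕ) (x : Fin N → ℝ) (n : ℕ) (hn : n < N) :
    symmExt N x n = x ⟨n, hn⟩ := dif_pos hn

lemma dct_apply (N : ℕ) (x : Fin N → ℝ) (k : Fin N) :
    dct N x k = ∑ n ∈ range N, symmExt N x n * ck N k ((n:ℝ) + 1/2) := by
  rw [dct, ← Fin.sum_univ_eq_sum_range (fun n => symmExt N x n * ck N k ((n:ℝ) + 1/2)) N]
  refine Finset.sum_congr rfl fun n _ => ?_
  rw [symmExt_lt N x n n.isLt, Fin.eta, ck]
  congr 2
  ring

lemma sum_ext (N : ℕ) (hN : 1 ≤ N) (k : ℕ) (f : ℕ → ℝ)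
    (hf : ∀ n < 2*N, f (2*N-1-n) = f n) (g : ℝ → ℝ) (hg : ∀ t, g (2*(N:ℝ) - t) = g t) :
    ∑ n ∈ range (2*N), f n * g ((n:ℝ)+1/2) = 2 * ∑ n ∈ range N, f n * g ((n:ℝ)+1/2) := by
  have hsplit : ∑ n ∈ range (2*N), f n * g ((n:ℝ)+1/2)
      = ∑ n ∈ range N, f n * g ((n:ℝ)+1/2) + ∑ i ∈ range N, f (N+i) * g (((N+i:ℕ):ℝ)+1/2) := by
    rw [Finset.range_eq_Ico, ← Finset.sum_Ico_consecutive _ (Nat.zero_le N) (by omega : N ≤ 2*N)]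
    congr 1
    rw [Finset.sum_Ico_eq_sum_range]
    simp
    rw [Finset.sum_Ico_eq_sum_range, show 2*N - N = N from by omega]
  rw [hsplit]
  have hrefl : ∑ i ∈ range N, f (N+i) * g (((N+i:ℕ):ℝ)+1/2)
      = ∑ i ∈ range N, f i * g ((i:ℝ)+1/2) := by
    rw [← Finset.sum_range_reflect (fun i => f (N+i) * g (((N+i:ℕ):ℝ)+1/2)) N]
    refine Finset.sum_congr rfl fun i hi => ?_
    rw [Finset.mem_range] at hi
    have h1 : N + (N-1-i) = 2*N-1-i := by omega
    rw [h1, hf i (by omega)]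
    congr 1
    have : ((2*N-1-i : ℕ):ℝ) = 2*(N:ℝ) - 1 - i := by
      have : i ≤ 2*N-1 := by omega
      push_cast [Nat.cast_sub (by omega : 1 ≤ 2*N), Nat.cast_sub (by omega : i ≤ 2*N-1)]
      ring
    rw [this, show 2*(N:ℝ) - 1 - i + 1/2 = 2*(N:ℝ) - ((i:ℝ)+1/2) by ring, hg]
  rw [hrefl]
  ring

lemma kernel_reindex (N : ℕ) (h : ℕ → ℝ) :
    ∑ i ∈ Ico 1 N, h (N - i) = ∑ i ∈ Ico 1 N, h i := by
  apply Finset.sum_nbij' (fun i => N - i) (fun i => N - i)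
  · intro i hi; rw [Finset.mem_Ico] at *; omega
  · intro i hi; rw [Finset.mem_Ico] at *; omega
  · intro i hi; rw [Finset.mem_Ico] at hi; omega
  · intro i hi; rw [Finset.mem_Ico] at hi; omega
  · intro i hi; rfl

lemma kernel_split (N : ℕ) (hN : 1 ≤ N) (g : ℕ → ℝ) (a : Fin N → ℝ) :
    ∑ m ∈ range (2*N), kernelExt N a m * g m
      = kernelExt N a 0 * g 0 + (∑ m ∈ Ico 1 N, kernelExt N a m * g m)
        + ∑ i ∈ Ico 1 N, kernelExt N a (N - i) * g (N + i) := by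
  rw [Finset.range_eq_Ico, ← Finset.sum_Ico_consecutive _ (Nat.zero_le N) (by omega : N ≤ 2*N)]
  congr 1
  · rw [Finset.sum_eq_sum_Ico_succ_bot (by omega : 0 < N)]
  · rw [Finset.sum_eq_sum_Ico_succ_bot (by omega : N < 2*N)]
    have hzero : kernelExt N a N = 0 := by
      unfold kernelExt
      rw [dif_neg (by omega), dif_neg (by omega)]
    rw [hzero, zero_mul, zero_add]
    apply Finset.sum_nbij' (fun m => m - N) (fun i => N + i)
    · intro m hm; rw [Finset.mem_Ico] at *; omega
    · intro i hi; rw [Finset.mem_Ico] at *; omega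
    · intro m hm; rw [Finset.mem_Ico] at hm; omega
    · intro i hi; rw [Finset.mem_Ico] at hi; omega
    · intro m hm
      rw [Finset.mem_Ico] at hm
      have h1 : N - (m - N) = 2*N - m := by omega
      have h2 : N + (m - N) = m := by omega
      rw [h1, h2]
      congr 1
      unfold kernelExt
      rw [dif_neg (by omega), dif_pos (⟨by omega, by omega⟩ : N < m ∧ 2*N - m < N),
        dif_pos (by omega : 2*N - m < N)]


lemma cos_flip (N : ℕ) (hN : 1 ≤ N) (k i : ℕ) (hi : i ≤ N) :
    Real.cos (Real.pi * k * ((N:ℝ) + i) / N) = Real.cos (Real.pi * k * ((N - i : ℕ):ℝ) / N) := by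
  have hN0 : (N:ℝ) ≠ 0 := by positivity
  have hc : ((N - i : ℕ):ℝ) = (N:ℝ) - i := by push_cast [Nat.cast_sub hi]; ring
  rw [hc, show Real.pi * k * ((N:ℝ) + i) / N = Real.pi * k * i / N + k * Real.pi from by field_simp; ring,
    show Real.pi * k * ((N:ℝ) - i) / N = (k:ℕ) * Real.pi - Real.pi * k * i / N from by field_simp,
    Real.cos_add_nat_mul_pi, Real.cos_nat_mul_pi_sub]

lemma sin_flip (N : ℕ) (hN : 1 ≤ N) (k i : ℕ) (hi : i ≤ N) :
    Real.sin (Real.pi * k * ((N:ℝ) + i) / N) = - Real.sin (Real.pi * k * ((N - i : ℕ):ℝ) / N) := by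
  have hN0 : (N:ℝ) ≠ 0 := by positivity
  have hc : ((N - i : ℕ):ℝ) = (N:ℝ) - i := by push_cast [Nat.cast_sub hi]; ring
  rw [hc, show Real.pi * k * ((N:ℝ) + i) / N = Real.pi * k * i / N + k * Real.pi from by field_simp; ring,
    show Real.pi * k * ((N:ℝ) - i) / N = (k:ℕ) * Real.pi - Real.pi * k * i / N from by field_simp,
    Real.sin_add_nat_mul_pi, Real.sin_sub]
  have h1 : Real.sin ((k:ℕ) * Real.pi) = 0 := by
    have := Real.sin_int_mul_pi (k:ℤ); push_cast at this ⊢; linarith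
  have h2 : Real.cos ((k:ℕ) * Real.pi) = (-1)^k := by
    have := Real.cos_nat_mul_pi_sub 0 k; simpa using this
  rw [h1, h2]
  ring

lemma kernel_cos_sum (N : ℕ) (hN : 1 ≤ N) (a : Fin N → ℝ) (k : ℕ) :
    ∑ m ∈ range (2*N), kernelExt N a m * Real.cos (Real.pi * k * m / N)
      = a ⟨0, hN⟩ + 2 * ∑ m ∈ Ico 1 N, kernelExt N a m * Real.cos (Real.pi * k * m / N) := by
  rw [kernel_split N hN _ a]
  have h0 : kernelExt N a 0 = a ⟨0, hN⟩ := dif_pos hN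
  have h3 : ∑ i ∈ Ico 1 N, kernelExt N a (N - i) * Real.cos (Real.pi * k * ((N+i : ℕ):ℝ) / N)
      = ∑ m ∈ Ico 1 N, kernelExt N a m * Real.cos (Real.pi * k * m / N) := by
    rw [← kernel_reindex N (fun m => kernelExt N a m * Real.cos (Real.pi * k * m / N))]
    refine Finset.sum_congr rfl fun i hi => ?_
    rw [Finset.mem_Ico] at hi
    congr 1
    rw [show ((N+i : ℕ):ℝ) = (N:ℝ) + i from by push_cast; ring, cos_flip N hN k i (by omega)]
  rw [h3, h0]
  simp
  ring

lemma kernel_sin_sum (N : ℕ) (hN : 1 ≤ N) (a : Fin N → ℝ) (k : ℕ) :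
    ∑ m ∈ range (2*N), kernelExt N a m * Real.sin (Real.pi * k * m / N) = 0 := by
  rw [kernel_split N hN _ a]
  have h3 : ∑ i ∈ Ico 1 N, kernelExt N a (N - i) * Real.sin (Real.pi * k * ((N+i : ℕ):ℝ) / N)
      = - ∑ m ∈ Ico 1 N, kernelExt N a m * Real.sin (Real.pi * k * m / N) := by
    rw [← kernel_reindex N (fun m => kernelExt N a m * Real.sin (Real.pi * k * m / N)), ← Finset.sum_neg_distrib]
    refine Finset.sum_congr rfl fun i hi => ?_
    rw [Finset.mem_Ico] at hi
    rw [show ((N+i : ℕ):ℝ) = (N:ℝ) + i from by push_cast; ring, sin_flip N hN k i (by omega)]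
    ring
  rw [h3]
  simp

noncomputable def Ahat (N : ℕ) (hN : 1 ≤ N) (a : Fin N → ℝ) (k : ℕ) : ℝ :=
  a ⟨0, hN⟩ + 2 * ∑ m ∈ Ico 1 N, kernelExt N a m * Real.cos (Real.pi * k * m / N)

lemma kernel_eigen (N : ℕ) (hN : 1 ≤ N) (a : Fin N → ℝ) (k : ℕ) (t : ℝ) :
    ∑ m ∈ range (2*N), kernelExt N a m * ck N k (t + m)
      = Ahat N hN a k * ck N k t := by
  have hN0 : (N:ℝ) ≠ 0 := by positivity
  have hterm : ∀ m : ℕ, ck N k (t + m)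
      = ck N k t * Real.cos (Real.pi * k * m / N)
        - Real.sin (Real.pi * k * t / N) * Real.sin (Real.pi * k * m / N) := by
    intro m
    rw [ck, ck, show Real.pi * k * (t + m) / N = Real.pi * k * t / N + Real.pi * k * m / N from by
      field_simp, Real.cos_add]
  calc ∑ m ∈ range (2*N), kernelExt N a m * ck N k (t + m)
      = ck N k t * (∑ m ∈ range (2*N), kernelExt N a m * Real.cos (Real.pi * k * m / N))
        - Real.sin (Real.pi * k * t / N)
          * ∑ m ∈ range (2*N), kernelExt N a m * Real.sin (Real.pi * k * m / N) := by
        rw [Finset.mul_sum, Finset.mul_sum, ← Finset.sum_sub_distrib]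
        exact Finset.sum_congr rfl fun m _ => by rw [hterm m]; ring
    _ = Ahat N hN a k * ck N k t := by
        rw [kernel_cos_sum N hN a k, kernel_sin_sum N hN a k, Ahat]
        ring

lemma mod_eval (K x : ℕ) (hK : 0 < K) (h : x < 2*K) : x % K = if x < K then x else x - K := by
  split
  · exact Nat.mod_eq_of_lt ‹_›
  · rw [Nat.mod_eq_sub_mod (by omega), Nat.mod_eq_of_lt (by omega)]

lemma kernelExt_even (N : ℕ) (hN : 1 ≤ N) (a : Fin N → ℝ) (m : ℕ) (hm : m < 2*N) :
    kernelExt N a ((2*N - m) % (2*N)) = kernelExt N a m := by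
  rcases Nat.eq_zero_or_pos m with h0 | h0
  · subst h0; simp
  · rw [Nat.mod_eq_of_lt (by omega : 2*N - m < 2*N)]
    unfold kernelExt
    rcases lt_trichotomy m N with h | h | h
    · rw [dif_neg (by omega), dif_pos (⟨by omega, by omega⟩ : N < 2*N - m ∧ 2*N - (2*N - m) < N)]
      simp only [show 2*N - (2*N - m) = m from by omega]
      rw [dif_pos h]
    · rw [h]; simp only [show 2*N - N = N from by omega]
    · have hlt : 2*N - m < N := by omega
      rw [dif_pos hlt, dif_neg (by omega), dif_pos (⟨h, hlt⟩ : N < m ∧ 2*N - m < N)]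

lemma conv_reflect (N : ℕ) (hN : 1 ≤ N) (a x : Fin N → ℝ) (n : ℕ) (hn : n < 2*N) :
    ∑ m ∈ range (2*N), kernelExt N a m * symmExt N x ((2*N-1-n + 2*N - m) % (2*N))
      = ∑ m ∈ range (2*N), kernelExt N a m * symmExt N x ((n + 2*N - m) % (2*N)) := by
  have hK : 0 < 2*N := by omega
  have hinv : ∀ m < 2*N, (2*N - (2*N - m) % (2*N)) % (2*N) = m := by
    intro m hm
    rcases Nat.eq_zero_or_pos m with h0 | h0
    · subst h0; simp
    · rw [Nat.mod_eq_of_lt (by omega : 2*N - m < 2*N),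
        show 2*N - (2*N - m) = m from by omega, Nat.mod_eq_of_lt hm]
  apply Finset.sum_nbij' (fun m => (2*N - m) % (2*N)) (fun m => (2*N - m) % (2*N))
  · intro m _; exact Finset.mem_range.mpr (Nat.mod_lt _ hK)
  · intro m _; exact Finset.mem_range.mpr (Nat.mod_lt _ hK)
  · intro m hm; exact hinv m (Finset.mem_range.mp hm)
  · intro m hm; exact hinv m (Finset.mem_range.mp hm)
  · intro m hm
    rw [Finset.mem_range] at hm
    rw [kernelExt_even N hN a m hm]
    congr 1
    have he : (n + 2*N - (2*N - m) % (2*N)) % (2*N)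
        = 2*N - 1 - ((2*N-1-n + 2*N - m) % (2*N)) := by
      rcases Nat.eq_zero_or_pos m with h0 | h0
      · subst h0
        simp only [Nat.sub_zero, Nat.mod_self]
        rw [mod_eval (2*N) (n+2*N) (by omega) (by omega),
          mod_eval (2*N) (2*N-1-n+2*N) (by omega) (by omega)]
        split_ifs <;> omega
      · rw [Nat.mod_eq_of_lt (by omega : 2*N - m < 2*N),
          mod_eval (2*N) (n+2*N - (2*N-m)) (by omega) (by omega),
          mod_eval (2*N) (2*N-1-n+2*N-m) (by omega) (by omega)]
        split_ifs <;> omega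
    rw [he, symmExt_reflect N x _ (Nat.mod_lt _ hK)]

lemma dct_symmConv (N : ℕ) (hN : 1 ≤ N) (a x : Fin N → ℝ) (k : Fin N) :
    dct N (symmConv N a x) k = Ahat N hN a (k:ℕ) * dct N x k := by
  have hK : 0 < 2*N := by omega
  set conv' : ℕ → ℝ :=
    fun n => ∑ m ∈ range (2*N), kernelExt N a m * symmExt N x ((n + 2*N - m) % (2*N)) with hconv
  have hA : ∀ n < 2*N, symmExt N (symmConv N a x) n = conv' n := by
    intro n hn
    by_cases h : n < N
    · rw [symmExt_lt _ _ _ h]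
      rfl
    · unfold symmExt
      rw [dif_neg h, dif_pos (by omega : 2*N-1-n < N)]
      have h2 : symmConv N a x ⟨2*N-1-n, by omega⟩ = conv' (2*N-1-n) := rfl
      rw [h2]
      exact conv_reflect N hN a x n hn
  have hrefl : ∀ n < 2*N, conv' (2*N-1-n) = conv' n := conv_reflect N hN a x
  have hg : ∀ t : ℝ, ck N (k:ℕ) (2*(N:ℝ) - t) = ck N (k:ℕ) t := by
    intro t
    exact ck_two_N_sub N hN (k:ℕ) t
  -- inner reindex
  have hE : ∀ m, m ∈ range (2*N) →
      ∑ n ∈ range (2*N), symmExt N x ((n + 2*N - m) % (2*N)) * ck N (k:ℕ) ((n:ℝ)+1/2)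
        = ∑ j ∈ range (2*N), symmExt N x j * ck N (k:ℕ) (((j:ℝ)+1/2) + (m:ℝ)) := by
    intro m hm
    rw [Finset.mem_range] at hm
    have hlinv : ∀ n < 2*N, ((n + 2*N - m) % (2*N) + m) % (2*N) = n := by
      intro n hn
      rw [Nat.mod_add_mod, show n + 2*N - m + m = n + 2*N from by omega,
        Nat.add_mod_right, Nat.mod_eq_of_lt hn]
    apply Finset.sum_nbij' (fun n => (n + 2*N - m) % (2*N)) (fun j => (j + m) % (2*N))
    · intro n _; exact Finset.mem_range.mpr (Nat.mod_lt _ hK)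
    · intro j _; exact Finset.mem_range.mpr (Nat.mod_lt _ hK)
    · intro n hn; exact hlinv n (Finset.mem_range.mp hn)
    · intro j hj
      rw [Finset.mem_range] at hj
      rw [show (j + m) % (2*N) + 2*N - m = (j + m) % (2*N) + (2*N - m) from by omega,
        Nat.mod_add_mod, show j + m + (2*N - m) = j + 2*N from by omega,
        Nat.add_mod_right, Nat.mod_eq_of_lt hj]
    · intro n hn
      rw [Finset.mem_range] at hn
      congr 1
      have h1 : ck N (k:ℕ) ((((n + 2*N - m) % (2*N) : ℕ):ℝ) + 1/2 + (m:ℝ))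
          = ck N (k:ℕ) ((((n + 2*N - m) % (2*N) + m : ℕ):ℝ) + 1/2) := by
        congr 1
        push_cast
        ring
      rw [h1, ← ck_mod N hN (k:ℕ) ((n + 2*N - m) % (2*N) + m) (1/2), hlinv n hn]
  have key : 2 * dct N (symmConv N a x) k = Ahat N hN a (k:ℕ) * (2 * dct N x k) := by
    calc 2 * dct N (symmConv N a x) k
        = 2 * ∑ n ∈ range N, symmExt N (symmConv N a x) n * ck N (k:ℕ) ((n:ℝ)+1/2) := by
          rw [dct_apply]
      _ = ∑ n ∈ range (2*N), symmExt N (symmConv N a x) n * ck N (k:ℕ) ((n:ℝ)+1/2) :=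
          (sum_ext N hN (k:ℕ) _ (symmExt_reflect N _) _ hg).symm
      _ = ∑ n ∈ range (2*N), conv' n * ck N (k:ℕ) ((n:ℝ)+1/2) := by
          refine Finset.sum_congr rfl fun n hn => ?_
          rw [hA n (Finset.mem_range.mp hn)]
      _ = ∑ n ∈ range (2*N), ∑ m ∈ range (2*N),
            kernelExt N a m * (symmExt N x ((n+2*N-m)%(2*N)) * ck N (k:ℕ) ((n:ℝ)+1/2)) := by
          refine Finset.sum_congr rfl fun n _ => ?_
          rw [hconv, Finset.sum_mul]
          exact Finset.sum_congr rfl fun m _ => by ring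
      _ = ∑ m ∈ range (2*N), ∑ n ∈ range (2*N),
            kernelExt N a m * (symmExt N x ((n+2*N-m)%(2*N)) * ck N (k:ℕ) ((n:ℝ)+1/2)) :=
          Finset.sum_comm
      _ = ∑ m ∈ range (2*N), kernelExt N a m
            * ∑ n ∈ range (2*N), symmExt N x ((n+2*N-m)%(2*N)) * ck N (k:ℕ) ((n:ℝ)+1/2) :=
          Finset.sum_congr rfl fun m _ => (Finset.mul_sum _ _ _).symm
      _ = ∑ m ∈ range (2*N), kernelExt N a m
            * ∑ j ∈ range (2*N), symmExt N x j * ck N (k:ℕ) (((j:ℝ)+1/2)+(m:ℝ)) :=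
          Finset.sum_congr rfl fun m hm => by rw [hE m hm]
      _ = ∑ m ∈ range (2*N), ∑ j ∈ range (2*N),
            kernelExt N a m * (symmExt N x j * ck N (k:ℕ) (((j:ℝ)+1/2)+(m:ℝ))) :=
          Finset.sum_congr rfl fun m _ => Finset.mul_sum _ _ _
      _ = ∑ j ∈ range (2*N), ∑ m ∈ range (2*N),
            kernelExt N a m * (symmExt N x j * ck N (k:ℕ) (((j:ℝ)+1/2)+(m:ℝ))) :=
          Finset.sum_comm
      _ = ∑ j ∈ range (2*N), symmExt N x j * (Ahat N hN a (k:ℕ) * ck N (k:ℕ) ((j:ℝ)+1/2)) := by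
          refine Finset.sum_congr rfl fun j _ => ?_
          rw [← kernel_eigen N hN a (k:ℕ) ((j:ℝ)+1/2), Finset.mul_sum]
          exact Finset.sum_congr rfl fun m _ => by ring
      _ = Ahat N hN a (k:ℕ) * ∑ j ∈ range (2*N), symmExt N x j * ck N (k:ℕ) ((j:ℝ)+1/2) := by
          rw [Finset.mul_sum]
          exact Finset.sum_congr rfl fun j _ => by ring
      _ = Ahat N hN a (k:ℕ) * (2 * ∑ n ∈ range N, symmExt N x n * ck N (k:ℕ) ((n:ℝ)+1/2)) := by
          rw [sum_ext N hN (k:ℕ) _ (symmExt_reflect N x) _ hg]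
      _ = Ahat N hN a (k:ℕ) * (2 * dct N x k) := by rw [← dct_apply]
  linarith

lemma dct_linear (N : ℕ) (c : ℝ) (x y : Fin N → ℝ) :
    dct N (c • x + y) = c • dct N x + dct N y := by
  funext k
  simp only [dct, Pi.add_apply, Pi.smul_apply, smul_eq_mul, Finset.mul_sum,
    ← Finset.sum_add_distrib]
  exact Finset.sum_congr rfl fun n _ => by ring

lemma dct_sub (N : ℕ) (x y : Fin N → ℝ) :
    dct N (x - y) = dct N x - dct N y := by
  funext k
  simp only [dct, Pi.sub_apply, ← Finset.sum_sub_distrib]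
  exact Finset.sum_congr rfl fun n _ => by ring

lemma dct_injective (N : ℕ) (hN : 1 ≤ N) : Function.Injective (dct N) := by
  intro x y hxy
  have h : dct N (x - y) = 0 := by rw [dct_sub, hxy, sub_self]
  have := dct_eq_zero N hN (x - y) h
  exact sub_eq_zero.mp this

lemma dct_bijective (N : ℕ) (hN : 1 ≤ N) : Function.Bijective (dct N) := by
  let L : (Fin N → ℝ) →ₗ[ℝ] (Fin N → ℝ) :=
    { toFun := dct N
      map_add' := fun x y => by
        have := dct_linear N 1 x y
        simpa using this
      map_smul' := fun c x => by
        have := dct_linear N c x 0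
        simp only [add_zero] at this
        simp only [RingHom.id_apply]
        rw [this]
        funext k
        simp [dct] }
  have hinj : Function.Injective L := dct_injective N hN
  exact ⟨hinj, LinearMap.injective_iff_surjective.mp hinj⟩

lemma Ahat_eq (N : ℕ) (hN : 1 ≤ N) (a : Fin N → ℝ) (k : ℕ) :
    Ahat N hN a k = a ⟨0, hN⟩ +
      2 * ∑ n ∈ Finset.univ.filter (fun n : Fin N => 1 ≤ (n : ℕ)),
        a n * Real.cos (Real.pi * ((n : ℕ) : ℝ) * (k : ℝ) / (N : ℝ)) := by
  rw [Ahat]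
  congr 1
  congr 1
  rw [Finset.sum_filter]
  have h1 : ∑ m ∈ Ico 1 N, kernelExt N a m * Real.cos (Real.pi * k * m / N)
      = ∑ m ∈ range N, (if 1 ≤ m then kernelExt N a m * Real.cos (Real.pi * k * m / N) else 0) := by
    rw [Finset.range_eq_Ico, Finset.sum_eq_sum_Ico_succ_bot (show 0 < N from hN),
      if_neg (by omega), zero_add]
    exact Finset.sum_congr rfl fun m hm => (if_pos (Finset.mem_Ico.mp hm).1).symm
  rw [h1, ← Fin.sum_univ_eq_sum_range
    (fun m => if 1 ≤ m then kernelExt N a m * Real.cos (Real.pi * k * m / N) else 0) N]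
  refine Finset.sum_congr rfl fun n _ => ?_
  by_cases h : 1 ≤ (n : ℕ)
  · rw [if_pos h, if_pos h, show kernelExt N a (n:ℕ) = a n from by
      rw [kernelExt, dif_pos n.isLt, Fin.eta]]
    congr 1
    ring
  · rw [if_neg h, if_neg h]


/-- The type-II DCT is a linear bijection; consequently `y = a *_s x` if and only if
`(Dy)[k] = Â[k]·(Dx)[k]` for all `k`, where `Â[k] = a[0] + 2Σ_{n=1}^{N−1} a[n]cos(πnk/N)`.
This one-to-one correspondence between space-domain kernels and their transform-domain
representations allows convolution kernel weights to be learned in the transform domain. -/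
theorem dct_bijective_and_convolution_characterization (N : ℕ) (hN : 1 ≤ N) :
    (∀ (c : ℝ) (x y : Fin N → ℝ), dct N (c • x + y) = c • dct N x + dct N y) ∧
    Function.Bijective (dct N) ∧
    (∀ a x y : Fin N → ℝ,
      y = symmConv N a x ↔
        ∀ k : Fin N,
          dct N y k =
            (a ⟨0, hN⟩ +
                2 * ∑ n ∈ Finset.univ.filter (fun n : Fin N => 1 ≤ (n : ℕ)),
                  a n * Real.cos (Real.pi * ((n : ℕ) : ℝ) * ((k : ℕ) : ℝ) / (N : ℝ))) *
              dct N x k) := by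
  refine ⟨dct_linear N, dct_bijective N hN, fun a x y => ?_⟩
  constructor
  · intro hy k
    rw [hy, dct_symmConv N hN a x k, Ahat_eq N hN a (k:ℕ)]
  · intro h
    apply dct_injective N hN
    funext k
    rw [h k, dct_symmConv N hN a x k, Ahat_eq N hN a (k:ℕ)]
end
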